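/- Assume additionally that every atom of F_{t_l} with l < ℓ contains exactly n+1 atoms of F_{t_{l+1}}, and that the discounted external assets x̃(t) := e^{−rt} x(t) form an ℝ^n-valued martingale such that for every l < ℓ and every atom ω of F_{t_l}, listing the n+1 successor atoms ω^{(1)}, ..., ω^{(n+1)}, the n vectors (x̃_k(t_{l+1}, ω^{(1)}), ..., x̃_k(t_{l+1}, ω^{(n+1)})) ∈ ℝ^{n+1} for k = 1, ..., n together with the all-ones vector are linearly independent (as holds for a nondegenerate geometric random walk on a multinomial tree). Then for any clearing solution (K, P, τ) of Ψ^T, setting K̃(t) := e^{−rt} K(t), there exist adapted ℝ^n-valued processes θ_j = (θ_j(t_l))_{l=0}^{ℓ−1}, j = 1, ..., n, such that for every bank i and every l < ℓ: K̃_i(t_{l+1}) − K̃_i(t_l) = (x̃_i(t_{l+1}) − x̃_i(t_l)) + (1−β) Σ_{j=1}^n L_{ji} θ_j(t_l)ᵀ (x̃(t_{l+1}) − x̃(t_l)), with initial condition K̃_i(0) = x̃_i(0) + e^{−rT} Σ_{j=1}^n L_{ji}(β + (1−β)ℙ(τ_j > T)) − e^{−rT} p̄_i and terminal condition K̃_i(T)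 = x̃_i(T) + e^{−rT}(Σ_{j=1}^n L_{ji}(β + (1−β)1{τ_j > T}) − p̄_i). -/

import Mathlib

open MeasureTheory

namespace Paper

open Classical in
/-- real-valued indicator of a proposition -/
noncomputable def indR (p : Prop) : ℝ := if p then 1 else 0

open Classical in
/-- boolean indicator of a proposition -/
noncomputable def indB (p : Prop) : Bool := if p then true else false

/-- The atom of the σ-algebra `m` containing the point `ω`:
the intersection of all `m`-measurable sets containing `ω`. -/
def atomOf {Ω : Type*} (m : MeasurableSpace Ω) (ω : Ω) : Set Ω :=
  ⋂₀ {s : Set Ω | MeasurableSet[m] s ∧ ω ∈ s}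

/-- The set `S`, with the order induced from the ambient preorder, is a nonempty complete
lattice: it has a greatest and a least element and every subset of `S` has a least upper
bound and a greatest lower bound within `S`. -/
def LatticeStructure {X : Type*} [Preorder X] (S : Set X) : Prop :=
  S.Nonempty ∧
  (∃ top ∈ S, ∀ z ∈ S, z ≤ top) ∧
  (∃ bot ∈ S, ∀ z ∈ S, bot ≤ z) ∧
  (∀ A ⊆ S,
    (∃ u ∈ S, (∀ a ∈ A, a ≤ u) ∧ ∀ w ∈ S, (∀ a ∈ A, a ≤ w) → u ≤ w) ∧
    (∃ v ∈ S, (∀ a ∈ A, v ≤ a) ∧ ∀ w ∈ S, (∀ a ∈ A, w ≤ a) → w ≤ v))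

/-- The space of triples `(K, P, τ)`: capital process, survival-probability process,
default-time vector, with the componentwise (pointwise) order. -/
abbrev Tri (Ω : Type*) (n ℓ : ℕ) :=
  (Fin (ℓ+1) → Ω → Fin n → ℝ) × (Fin (ℓ+1) → Ω → Fin n → ℝ) × (Fin n → Ω → ℝ)

/-- Data of the single-maturity interbank model. -/
structure SM (Ω : Type*) (n ℓ : ℕ) where
  /-- maturity -/
  T : ℝ
  /-- times `0 = t 0 < t 1 < ... < t ℓ = T` -/
  t : Fin (ℓ+1) → ℝ
  /-- external asset process -/
  x : Fin (ℓ+1) → Ω → Fin n → ℝ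
  /-- interbank liabilities -/
  L : Fin n → Fin n → ℝ
  /-- external liabilities -/
  L0 : Fin n → ℝ
  /-- recovery rate -/
  β : ℝ
  /-- risk-free rate -/
  r : ℝ

namespace SM

variable {Ω : Type*} {n ℓ : ℕ}

/-- total liabilities `p̄_i` -/
noncomputable def pbar (M : SM Ω n ℓ) (i : Fin n) : ℝ := (∑ j, M.L i j) + M.L0 i

/-- discount factor `e^{-r (T - t l)}` -/
noncomputable def disc (M : SM Ω n ℓ) (l : Fin (ℓ+1)) : ℝ :=
  Real.exp (-(M.r * (M.T - M.t l)))

/-- the capital component `Ψ^T_K` of the clearing map -/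
noncomputable def ΨK (M : SM Ω n ℓ) (l : Fin (ℓ+1)) (Pt : Ω → Fin n → ℝ)
    (ω : Ω) (i : Fin n) : ℝ :=
  M.x l ω i + M.disc l * (∑ j, M.L j i * (M.β + (1 - M.β) * Pt ω j))
    - M.disc l * M.pbar i

/-- the default-time component `Ψ^T_τ` of the clearing map: the first time `t l` at which
the capital of bank `i` is negative, and `T + 1` if the capital stays nonnegative -/
noncomputable def Ψτ (M : SM Ω n ℓ) (K : Fin (ℓ+1) → Ω → Fin n → ℝ)
    (i : Fin n) (ω : Ω) : ℝ :=
  sInf (insert (M.T + 1) ((fun l => M.t l) '' {l : Fin (ℓ+1) | K l ω i < 0}))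

/-- the survival-probability component `Ψ^T_P` of the clearing map:
`ℙ(τ_i > T | 𝓕 l)` -/
noncomputable def ΨP [MeasurableSpace Ω] (M : SM Ω n ℓ)
    (𝓕 : Fin (ℓ+1) → MeasurableSpace Ω) (μ : Measure Ω)
    (τ : Fin n → Ω → ℝ) (l : Fin (ℓ+1)) (ω : Ω) (i : Fin n) : ℝ :=
  (μ[fun ω' => indR (M.T < τ i ω') | 𝓕 l]) ω

/-- membership in the domain `𝔻^T`: adaptedness, the balance-sheet bounds on `K`,
`P` valued in `[0,1]`, and `τ` valued in `{t_0, ..., t_ℓ, T+1}` -/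
def memD [MeasurableSpace Ω] (M : SM Ω n ℓ) (𝓕 : Fin (ℓ+1) → MeasurableSpace Ω)
    (K P : Fin (ℓ+1) → Ω → Fin n → ℝ) (τ : Fin n → Ω → ℝ) : Prop :=
  (∀ l i, Measurable[𝓕 l] fun ω => K l ω i) ∧
  (∀ l i, Measurable[𝓕 l] fun ω => P l ω i) ∧
  (∀ l ω i, M.x l ω i - M.disc l * M.pbar i ≤ K l ω i) ∧
  (∀ l ω i, K l ω i ≤ M.x l ω i + M.disc l * ((∑ j, M.L j i) - M.pbar i)) ∧
  (∀ l ω i, 0 ≤ P l ω i ∧ P l ω i ≤ 1) ∧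
  (∀ i ω, (∃ l, τ i ω = M.t l) ∨ τ i ω = M.T + 1)

/-- the clearing map `Ψ^T` -/
noncomputable def Ψmap [MeasurableSpace Ω] (M : SM Ω n ℓ)
    (𝓕 : Fin (ℓ+1) → MeasurableSpace Ω) (μ : Measure Ω) (z : Tri Ω n ℓ) : Tri Ω n ℓ :=
  (fun l ω i => M.ΨK l (z.2.1 l) ω i,
   fun l ω i => M.ΨP 𝓕 μ z.2.2 l ω i,
   fun i ω => M.Ψτ z.1 i ω)

/-- the set of clearing solutions: fixed points of `Ψ^T` in `𝔻^T` -/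
def clearingSet [MeasurableSpace Ω] (M : SM Ω n ℓ)
    (𝓕 : Fin (ℓ+1) → MeasurableSpace Ω) (μ : Measure Ω) : Set (Tri Ω n ℓ) :=
  {z | M.memD 𝓕 z.1 z.2.1 z.2.2 ∧ M.Ψmap 𝓕 μ z = z}

/-- Standing assumptions of the single-maturity model. -/
structure Valid [MeasurableSpace Ω] (M : SM Ω n ℓ)
    (𝓕 : Fin (ℓ+1) → MeasurableSpace Ω) (μ : Measure Ω) : Prop where
  hn : 1 ≤ n
  hTop : (inferInstance : MeasurableSpace Ω) = ⊤
  hprob : IsProbabilityMeasure μ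
  hpos : ∀ ω : Ω, 0 < μ {ω}
  hmono : Monotone 𝓕
  h0 : 𝓕 0 = ⊥
  hlast : 𝓕 (Fin.last ℓ) = (inferInstance : MeasurableSpace Ω)
  ht : StrictMono M.t
  ht0 : M.t 0 = 0
  htT : M.t (Fin.last ℓ) = M.T
  hx : ∀ l i, Measurable[𝓕 l] fun ω => M.x l ω i
  hx0 : ∀ l ω i, 0 ≤ M.x l ω i
  hL : ∀ i j, 0 ≤ M.L i j
  hLd : ∀ i, M.L i i = 0
  hL0 : ∀ i, 0 ≤ M.L0 i
  hβ0 : 0 ≤ M.β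
  hβ1 : M.β ≤ 1
  hr : 0 ≤ M.r

end SM

section AtomHelpers

variable {Ω : Type*}

lemma mem_atomOf (m : MeasurableSpace Ω) (ω : Ω) : ω ∈ atomOf m ω :=
  Set.mem_sInter.2 fun _ hs => hs.2

lemma atomOf_subset {m : MeasurableSpace Ω} {ω : Ω} {s : Set Ω}
    (hs : MeasurableSet[m] s) (hω : ω ∈ s) : atomOf m ω ⊆ s :=
  Set.sInter_subset_of_mem ⟨hs, hω⟩

lemma measurableSet_atomOf [Finite Ω] (m : MeasurableSpace Ω) (ω : Ω) :
    MeasurableSet[m] (atomOf m ω) :=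
  MeasurableSet.sInter (Set.to_countable _) fun _ hs => hs.1

lemma mem_atomOf_symm {m : MeasurableSpace Ω} {ω ω' : Ω} (h : ω' ∈ atomOf m ω) :
    ω ∈ atomOf m ω' := by
  refine Set.mem_sInter.2 fun s hs => ?_
  by_contra hωs
  exact (atomOf_subset hs.1.compl hωs) h hs.2

lemma atomOf_eq_of_mem [Finite Ω] {m : MeasurableSpace Ω} {ω ω' : Ω}
    (h : ω' ∈ atomOf m ω) : atomOf m ω' = atomOf m ω :=
  Set.Subset.antisymm
    (atomOf_subset (measurableSet_atomOf m ω) h)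
    (atomOf_subset (measurableSet_atomOf m ω') (mem_atomOf_symm h))

lemma constant_on_atomOf {m : MeasurableSpace Ω} {f : Ω → ℝ}
    (hf : Measurable[m] f) {ω ω' : Ω} (h : ω' ∈ atomOf m ω) : f ω' = f ω :=
  atomOf_subset (hf (measurableSet_singleton (f ω))) rfl h

lemma measurable_of_constant_on_atoms [Finite Ω] {m : MeasurableSpace Ω} {f : Ω → ℝ}
    (h : ∀ ω ω', ω' ∈ atomOf m ω → f ω' = f ω) : Measurable[m] f := by
  intro s _
  have hrw : f ⁻¹' s = ⋃ ω ∈ f ⁻¹' s, atomOf m ω := by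
    ext ω'
    constructor
    · intro hω'
      exact Set.mem_biUnion hω' (mem_atomOf m ω')
    · intro hmem
      simp only [Set.mem_iUnion] at hmem
      obtain ⟨ω, hω, hmem⟩ := hmem
      show f ω' ∈ s
      rw [h ω ω' hmem]
      exact hω
  rw [hrw]
  exact MeasurableSet.biUnion (Set.to_countable _) fun ω _ => measurableSet_atomOf m ω

end AtomHelpers

open SM in
/-- Proposition 2.7: stochastic-volatility form of the capital dynamics.
Under the multinomial-tree nondegeneracy assumptions on the discounted external assets
`xt l ω k = e^{-r t_l} x_k(t_l, ω)`, any clearing solution `(K, P, τ)` of `Ψ^T` admits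
adapted processes `θ_j` such that the discounted capital `Kt l ω i = e^{-r t_l} K_i(t_l, ω)`
satisfies `ΔKt_i = Δxt_i + (1-β) Σ_j L_{ji} θ_j(t_l)ᵀ Δxt`, together with the stated
initial and terminal conditions. -/
theorem clearing_capital_volatility_form
    {Ω : Type*} [Fintype Ω] [MeasurableSpace Ω] {n ℓ : ℕ}
    (M : SM Ω n ℓ) (𝓕 : Fin (ℓ+1) → MeasurableSpace Ω) (μ : MeasureTheory.Measure Ω)
    (hM : M.Valid 𝓕 μ)
    (hbranch : ∀ (l : Fin ℓ) (ω : Ω),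
      Set.ncard {A : Set Ω | ∃ ω' ∈ atomOf (𝓕 l.castSucc) ω, A = atomOf (𝓕 l.succ) ω'}
        = n + 1)
    (xt : Fin (ℓ+1) → Ω → Fin n → ℝ)
    (hxt : ∀ l ω k, xt l ω k = Real.exp (-(M.r * M.t l)) * M.x l ω k)
    (hxt_mart : ∀ (l : Fin ℓ) (k : Fin n) (ω : Ω),
      (μ[fun ω' => xt l.succ ω' k | 𝓕 l.castSucc]) ω = xt l.castSucc ω k)
    (hLI : ∀ (l : Fin ℓ) (ω : Ω) (e : Fin (n+1) → Ω),
      (∀ j, e j ∈ atomOf (𝓕 l.castSucc) ω) →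
      (∀ j j', j ≠ j' → atomOf (𝓕 l.succ) (e j) ≠ atomOf (𝓕 l.succ) (e j')) →
      LinearIndependent ℝ
        (Fin.cons (fun _ : Fin (n+1) => (1:ℝ))
          (fun (k : Fin n) (j : Fin (n+1)) => xt l.succ (e j) k)))
    (K P : Fin (ℓ+1) → Ω → Fin n → ℝ) (τ : Fin n → Ω → ℝ)
    (hz : (K, P, τ) ∈ M.clearingSet 𝓕 μ)
    (Kt : Fin (ℓ+1) → Ω → Fin n → ℝ)
    (hKt : ∀ l ω i, Kt l ω i = Real.exp (-(M.r * M.t l)) * K l ω i) :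
    ∃ θ : Fin n → Fin ℓ → Ω → Fin n → ℝ,
      (∀ j l k, Measurable[𝓕 l.castSucc] fun ω => θ j l ω k) ∧
      (∀ (l : Fin ℓ) (ω : Ω) (i : Fin n),
        Kt l.succ ω i - Kt l.castSucc ω i
          = (xt l.succ ω i - xt l.castSucc ω i)
            + (1 - M.β) * ∑ j, M.L j i *
                (∑ k, θ j l ω k * (xt l.succ ω k - xt l.castSucc ω k))) ∧
      (∀ (ω : Ω) (i : Fin n),
        Kt 0 ω i
          = xt 0 ω i
            + Real.exp (-(M.r * M.T)) *
                (∑ j, M.L j i * (M.β + (1 - M.β) * (μ {ω' | M.T < τ j ω'}).toReal))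
            - Real.exp (-(M.r * M.T)) * M.pbar i) ∧
      (∀ (ω : Ω) (i : Fin n),
        Kt (Fin.last ℓ) ω i
          = xt (Fin.last ℓ) ω i
            + Real.exp (-(M.r * M.T)) *
                ((∑ j, M.L j i * (M.β + (1 - M.β) * indR (M.T < τ j ω))) - M.pbar i)) := by
  classical
  haveI := hM.hprob
  have hTop' : ‹MeasurableSpace Ω› = (⊤ : MeasurableSpace Ω) := hM.hTop
  haveI : MeasurableSingletonClass Ω :=
    ⟨fun a => by rw [hTop']; exact MeasurableSpace.measurableSet_top⟩
  have hne : Nonempty Ω := by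
    rcases isEmpty_or_nonempty Ω with h | h
    · exfalso
      have h1 : μ Set.univ = 1 := measure_univ
      rw [Set.univ_eq_empty_iff.2 h, measure_empty] at h1
      exact zero_ne_one h1
    · exact h
  have hm0 : ∀ l, 𝓕 l ≤ (inferInstance : MeasurableSpace Ω) := fun l => by
    rw [hTop']; exact le_top
  have hms : ∀ s : Set Ω, MeasurableSet s := fun s => by
    rw [hTop']; exact MeasurableSpace.measurableSet_top
  have hmeas : ∀ f : Ω → ℝ, Measurable f := fun f s _ => hms _
  have hint : ∀ f : Ω → ℝ, Integrable f μ := fun f => .of_finite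
  have hPmeas : ∀ l i, Measurable[𝓕 l] fun ω => P l ω i := hz.1.2.1
  have hfixK : ∀ l ω i, K l ω i = M.ΨK l (P l) ω i := fun l ω i =>
    (congrFun (congrFun (congrFun (congrArg Prod.fst hz.2) l) ω) i).symm
  have hfixP : ∀ l ω i, P l ω i = M.ΨP 𝓕 μ τ l ω i := fun l ω i =>
    (congrFun (congrFun (congrFun (congrArg (fun z => z.2.1) hz.2) l) ω) i).symm
  set cT : ℝ := Real.exp (-(M.r * M.T)) with hcT
  have hxtm : ∀ l k, Measurable[𝓕 l] fun ω => xt l ω k := by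
    intro l k
    have hfe : (fun ω => xt l ω k) = fun ω => Real.exp (-(M.r * M.t l)) * M.x l ω k :=
      funext fun ω => hxt l ω k
    rw [hfe]
    exact (hM.hx l k).const_mul _
  have hKt' : ∀ l ω i, Kt l ω i
      = xt l ω i + cT * (∑ j, M.L j i * (M.β + (1 - M.β) * P l ω j)) - cT * M.pbar i := by
    intro l ω i
    have hd : Real.exp (-(M.r * M.t l)) * M.disc l = cT := by
      rw [SM.disc, hcT, ← Real.exp_add]; congr 1; ring
    rw [hKt, hfixK, SM.ΨK, hxt]
    linear_combination (∑ j, M.L j i * (M.β + (1 - M.β) * P l ω j) - M.pbar i) * hd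
  have hatompos : ∀ (l : Fin (ℓ+1)) (ω : Ω), 0 < (μ (atomOf (𝓕 l) ω)).toReal := by
    intro l ω
    refine ENNReal.toReal_pos ?_ (measure_ne_top μ _)
    exact ((hM.hpos ω).trans_le
      (measure_mono (Set.singleton_subset_iff.2 (mem_atomOf (𝓕 l) ω)))).ne'
  have hconstInt : ∀ (s : Set Ω) (f : Ω → ℝ) (c : ℝ), (∀ ω' ∈ s, f ω' = c) →
      ∫ ω' in s, f ω' ∂μ = (μ s).toReal * c := by
    intro s f c hf
    rw [setIntegral_congr_fun (hms s) (fun ω' hω' => hf ω' hω'), setIntegral_const, smul_eq_mul, measureReal_def]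
  -- the key representation lemma, per atom
  have key : ∀ (j : Fin n) (l : Fin ℓ) (ω0 : Ω), ∃ θv : Fin n → ℝ,
      ∀ ω' ∈ atomOf (𝓕 l.castSucc) ω0,
        cT * P l.succ ω' j - cT * P l.castSucc ω' j
          = ∑ k, θv k * (xt l.succ ω' k - xt l.castSucc ω' k) := by
    intro j l ω0
    have hm12 : 𝓕 l.castSucc ≤ 𝓕 l.succ := hM.hmono (Fin.castSucc_lt_succ (i := l)).le
    have hA1 : MeasurableSet[𝓕 l.castSucc] (atomOf (𝓕 l.castSucc) ω0) :=
      measurableSet_atomOf _ ω0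
    have hA2 : MeasurableSet[𝓕 l.succ] (atomOf (𝓕 l.castSucc) ω0) := hm12 _ hA1
    -- enumerate the n+1 successor atoms and pick representatives
    have hSfin : Set.Finite {A : Set Ω | ∃ ω' ∈ atomOf (𝓕 l.castSucc) ω0,
        A = atomOf (𝓕 l.succ) ω'} := Set.toFinite _
    have hcard : hSfin.toFinset.card = n + 1 := by
      rw [← Set.ncard_eq_toFinset_card _ hSfin]; exact hbranch l ω0
    set eqv := Finset.equivFinOfCardEq hcard with heqv
    have hmemS : ∀ jj : Fin (n+1), ∃ ω', ω' ∈ atomOf (𝓕 l.castSucc) ω0 ∧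
        ((eqv.symm jj : hSfin.toFinset) : Set Ω) = atomOf (𝓕 l.succ) ω' := by
      intro jj
      have h2 := (eqv.symm jj).2
      rw [Set.Finite.mem_toFinset] at h2
      exact h2
    choose e he1 he2 using hmemS
    have hatom_e : ∀ jj, atomOf (𝓕 l.succ) (e jj) = ((eqv.symm jj : hSfin.toFinset) : Set Ω) :=
      fun jj => (he2 jj).symm
    have hdist : ∀ jj jj', jj ≠ jj' →
        atomOf (𝓕 l.succ) (e jj) ≠ atomOf (𝓕 l.succ) (e jj') := by
      intro jj jj' hne' hEq
      apply hne'
      have hsub : (eqv.symm jj : hSfin.toFinset) = eqv.symm jj' :=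
        Subtype.ext (by rw [← hatom_e, ← hatom_e, hEq])
      simpa using congrArg eqv hsub
    have hcover : ∀ ω' ∈ atomOf (𝓕 l.castSucc) ω0, ∃ jj, ω' ∈ atomOf (𝓕 l.succ) (e jj) := by
      intro ω' hω'
      have hmem : atomOf (𝓕 l.succ) ω' ∈ {A : Set Ω | ∃ ω'' ∈ atomOf (𝓕 l.castSucc) ω0,
          A = atomOf (𝓕 l.succ) ω''} := ⟨ω', hω', rfl⟩
      refine ⟨eqv ⟨atomOf (𝓕 l.succ) ω', (Set.Finite.mem_toFinset hSfin).2 hmem⟩, ?_⟩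
      have heq2 : atomOf (𝓕 l.succ)
          (e (eqv ⟨atomOf (𝓕 l.succ) ω', (Set.Finite.mem_toFinset hSfin).2 hmem⟩))
          = atomOf (𝓕 l.succ) ω' := by
        rw [hatom_e, Equiv.symm_apply_apply]
      rw [heq2]
      exact mem_atomOf _ ω'
    -- basis of ℝ^{n+1} given by the constant vector and the asset values
    have hli := hLI l ω0 e he1 hdist
    have hcardeq : Fintype.card (Fin (n+1)) = Module.finrank ℝ (Fin (n+1) → ℝ) := by
      simp [Module.finrank_fintype_fun_eq_card]
    set b := basisOfLinearIndependentOfCardEqFinrank hli hcardeq with hb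
    have hbcoe : ⇑b = Fin.cons (fun _ : Fin (n+1) => (1:ℝ))
        (fun (k : Fin n) (jj : Fin (n+1)) => xt l.succ (e jj) k) :=
      coe_basisOfLinearIndependentOfCardEqFinrank hli hcardeq
    set w : Fin (n+1) → ℝ := fun jj => cT * P l.succ (e jj) j with hw
    have hwval : ∀ jj, w jj = b.repr w 0 + ∑ k, b.repr w k.succ * xt l.succ (e jj) k := by
      intro jj
      have h1 := congrFun (b.sum_repr w) jj
      rw [Finset.sum_apply] at h1
      have h2 : ∀ i : Fin (n+1), (b.repr w i • b i) jj
          = b.repr w i * (Fin.cons (fun _ : Fin (n+1) => (1:ℝ))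
            (fun (k : Fin n) (jj' : Fin (n+1)) => xt l.succ (e jj') k)
              : Fin (n+1) → Fin (n+1) → ℝ) i jj := by
        intro i
        rw [Pi.smul_apply, smul_eq_mul, hbcoe]
      rw [Finset.sum_congr rfl (fun i _ => h2 i), Fin.sum_univ_succ] at h1
      simp only [Fin.cons_zero, Fin.cons_succ] at h1
      rw [← h1]
      ring
    have hspan : ∀ ω' ∈ atomOf (𝓕 l.castSucc) ω0,
        cT * P l.succ ω' j = b.repr w 0 + ∑ k, b.repr w k.succ * xt l.succ ω' k := by
      intro ω' hω'
      obtain ⟨jj, hjj⟩ := hcover ω' hω'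
      rw [show P l.succ ω' j = P l.succ (e jj) j from
        constant_on_atomOf (hPmeas l.succ j) hjj]
      rw [show (∑ k, b.repr w k.succ * xt l.succ ω' k)
          = ∑ k, b.repr w k.succ * xt l.succ (e jj) k from
        Finset.sum_congr rfl fun k _ => by rw [constant_on_atomOf (hxtm l.succ k) hjj]]
      exact hwval jj
    have hPm1const : ∀ ω' ∈ atomOf (𝓕 l.castSucc) ω0,
        P l.castSucc ω' j = P l.castSucc ω0 j :=
      fun ω' h => constant_on_atomOf (hPmeas l.castSucc j) h
    -- conditional expectation computations over the atom
    have hEP : ∫ ω' in atomOf (𝓕 l.castSucc) ω0, P l.succ ω' j ∂μ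
        = (μ (atomOf (𝓕 l.castSucc) ω0)).toReal * P l.castSucc ω0 j := by
      have e2 : (fun ω' => P l.succ ω' j)
          = μ[(fun ω'' => indR (M.T < τ j ω''))|𝓕 l.succ] := by
        funext ω'; rw [hfixP]; rfl
      have e1 : (fun ω' => P l.castSucc ω' j)
          = μ[(fun ω'' => indR (M.T < τ j ω''))|𝓕 l.castSucc] := by
        funext ω'; rw [hfixP]; rfl
      calc ∫ ω' in atomOf (𝓕 l.castSucc) ω0, P l.succ ω' j ∂μ
          = ∫ ω' in atomOf (𝓕 l.castSucc) ω0,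
              (μ[(fun ω'' => indR (M.T < τ j ω''))|𝓕 l.succ]) ω' ∂μ := by rw [← e2]
        _ = ∫ ω' in atomOf (𝓕 l.castSucc) ω0, indR (M.T < τ j ω') ∂μ :=
              setIntegral_condExp (hm0 l.succ) (hint _) hA2
        _ = ∫ ω' in atomOf (𝓕 l.castSucc) ω0,
              (μ[(fun ω'' => indR (M.T < τ j ω''))|𝓕 l.castSucc]) ω' ∂μ :=
              (setIntegral_condExp (hm0 l.castSucc) (hint _) hA1).symm
        _ = ∫ ω' in atomOf (𝓕 l.castSucc) ω0, P l.castSucc ω' j ∂μ := by rw [← e1]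
        _ = (μ (atomOf (𝓕 l.castSucc) ω0)).toReal * P l.castSucc ω0 j :=
              hconstInt _ _ _ hPm1const
    have hExt : ∀ k, ∫ ω' in atomOf (𝓕 l.castSucc) ω0, xt l.succ ω' k ∂μ
        = (μ (atomOf (𝓕 l.castSucc) ω0)).toReal * xt l.castSucc ω0 k := by
      intro k
      calc ∫ ω' in atomOf (𝓕 l.castSucc) ω0, xt l.succ ω' k ∂μ
          = ∫ ω' in atomOf (𝓕 l.castSucc) ω0,
              (μ[(fun ω'' => xt l.succ ω'' k)|𝓕 l.castSucc]) ω' ∂μ :=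
            (setIntegral_condExp (hm0 l.castSucc) (hint _) hA1).symm
        _ = ∫ ω' in atomOf (𝓕 l.castSucc) ω0, xt l.castSucc ω' k ∂μ := by
            simp only [hxt_mart l k]
        _ = (μ (atomOf (𝓕 l.castSucc) ω0)).toReal * xt l.castSucc ω0 k :=
            hconstInt _ _ _ (fun ω' h => constant_on_atomOf (hxtm l.castSucc k) h)
    -- integrate the spanning identity over the atom and cancel the measure
    have hbase : cT * P l.castSucc ω0 j
        = b.repr w 0 + ∑ k, b.repr w k.succ * xt l.castSucc ω0 k := by
      refine mul_left_cancel₀ (hatompos l.castSucc ω0).ne' ?_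
      have h1 : ∫ ω' in atomOf (𝓕 l.castSucc) ω0, cT * P l.succ ω' j ∂μ
          = (μ (atomOf (𝓕 l.castSucc) ω0)).toReal * (cT * P l.castSucc ω0 j) := by
        rw [integral_const_mul, hEP]; ring
      have h2 : ∫ ω' in atomOf (𝓕 l.castSucc) ω0,
          (b.repr w 0 + ∑ k, b.repr w k.succ * xt l.succ ω' k) ∂μ
          = (μ (atomOf (𝓕 l.castSucc) ω0)).toReal
            * (b.repr w 0 + ∑ k, b.repr w k.succ * xt l.castSucc ω0 k) := by
        rw [integral_add ((hint _).integrableOn) ((hint _).integrableOn),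
          integral_finset_sum _ (fun k _ => (hint _).integrableOn),
          setIntegral_const, smul_eq_mul, measureReal_def]
        rw [Finset.sum_congr rfl (fun (k : Fin n) (_ : k ∈ Finset.univ) => by
          rw [integral_const_mul, hExt k] :
            ∀ k ∈ Finset.univ, ∫ ω' in atomOf (𝓕 l.castSucc) ω0,
              b.repr w k.succ * xt l.succ ω' k ∂μ
              = b.repr w k.succ * ((μ (atomOf (𝓕 l.castSucc) ω0)).toReal
                  * xt l.castSucc ω0 k))]
        rw [mul_add, Finset.mul_sum]
        congr 1
        exact Finset.sum_congr rfl fun k _ => by ring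
      have h0 : ∫ ω' in atomOf (𝓕 l.castSucc) ω0, cT * P l.succ ω' j ∂μ
          = ∫ ω' in atomOf (𝓕 l.castSucc) ω0,
              (b.repr w 0 + ∑ k, b.repr w k.succ * xt l.succ ω' k) ∂μ :=
        setIntegral_congr_fun (hms _) (fun ω' hω' => hspan ω' hω')
      rw [← h1, h0, h2]
    refine ⟨fun k => b.repr w k.succ, ?_⟩
    intro ω' hω'
    have h3 : ∀ k, xt l.castSucc ω' k = xt l.castSucc ω0 k := fun k =>
      constant_on_atomOf (hxtm l.castSucc k) hω'
    calc cT * P l.succ ω' j - cT * P l.castSucc ω' j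
        = (b.repr w 0 + ∑ k, b.repr w k.succ * xt l.succ ω' k)
          - (b.repr w 0 + ∑ k, b.repr w k.succ * xt l.castSucc ω0 k) := by
          rw [hspan ω' hω', hPm1const ω' hω', hbase]
      _ = ∑ k, b.repr w k.succ * (xt l.succ ω' k - xt l.castSucc ω' k) := by
          rw [show (∑ k, b.repr w k.succ * xt l.castSucc ω0 k)
              = ∑ k, b.repr w k.succ * xt l.castSucc ω' k from
            Finset.sum_congr rfl fun k _ => by rw [h3 k]]
          rw [show ∀ (S1 S2 : ℝ), (b.repr w 0 + S1) - (b.repr w 0 + S2) = S1 - S2 from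
            fun _ _ => by ring]
          rw [← Finset.sum_sub_distrib]
          exact Finset.sum_congr rfl fun k _ => by ring
  -- choose the coefficients, constant on atoms
  obtain ⟨pick, hpickmem⟩ : ∃ pick : Set Ω → Ω,
      ∀ (m : MeasurableSpace Ω) (ω : Ω), pick (atomOf m ω) ∈ atomOf m ω := by
    refine ⟨fun A => if h : A.Nonempty then h.choose else Classical.arbitrary Ω, ?_⟩
    intro m ω
    have h : (atomOf m ω).Nonempty := ⟨ω, mem_atomOf m ω⟩
    show (if h : (atomOf m ω).Nonempty then h.choose else Classical.arbitrary Ω) ∈ atomOf m ω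
    rw [dif_pos h]
    exact h.choose_spec
  choose g hg using fun (j : Fin n) (l : Fin ℓ) (ωr : Ω) => key j l ωr
  refine ⟨fun j l ω k => g j l (pick (atomOf (𝓕 l.castSucc) ω)) k, ?_, ?_, ?_, ?_⟩
  · -- adaptedness
    intro j l k
    refine measurable_of_constant_on_atoms fun ω ω' hω' => ?_
    show g j l (pick (atomOf (𝓕 l.castSucc) ω')) k = g j l (pick (atomOf (𝓕 l.castSucc) ω)) k
    rw [atomOf_eq_of_mem hω']
  · -- the capital dynamics
    intro l ω i
    have hθ : ∀ j : Fin n, cT * P l.succ ω j - cT * P l.castSucc ω j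
        = ∑ k, g j l (pick (atomOf (𝓕 l.castSucc) ω)) k
            * (xt l.succ ω k - xt l.castSucc ω k) := by
      intro j
      have hmem := hpickmem (𝓕 l.castSucc) ω
      have hAeq : atomOf (𝓕 l.castSucc) (pick (atomOf (𝓕 l.castSucc) ω))
          = atomOf (𝓕 l.castSucc) ω := atomOf_eq_of_mem hmem
      exact hg j l (pick (atomOf (𝓕 l.castSucc) ω)) ω (by rw [hAeq]; exact mem_atomOf _ ω)
    rw [hKt' l.succ ω i, hKt' l.castSucc ω i]
    have hsum : cT * (∑ j, M.L j i * (M.β + (1 - M.β) * P l.succ ω j))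
        - cT * (∑ j, M.L j i * (M.β + (1 - M.β) * P l.castSucc ω j))
        = (1 - M.β) * ∑ j, M.L j i * (∑ k, g j l (pick (atomOf (𝓕 l.castSucc) ω)) k
            * (xt l.succ ω k - xt l.castSucc ω k)) := by
      rw [Finset.mul_sum, Finset.mul_sum, ← Finset.sum_sub_distrib, Finset.mul_sum]
      refine Finset.sum_congr rfl fun j _ => ?_
      rw [← hθ j]
      ring
    linear_combination hsum
  · -- initial condition
    intro ω i
    rw [hKt' 0 ω i]
    have hP0 : ∀ j, P 0 ω j = (μ {ω' | M.T < τ j ω'}).toReal := by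
      intro j
      rw [hfixP]
      show (μ[fun ω' => indR (M.T < τ j ω')|𝓕 0]) ω = _
      rw [hM.h0]
      simp only [condExp_bot]
      have hind : (fun ω' => indR (M.T < τ j ω'))
          = Set.indicator {ω' | M.T < τ j ω'} (fun _ => (1:ℝ)) := by
        funext ω'
        by_cases h : M.T < τ j ω' <;>
          simp [indR, Set.indicator_apply, Set.mem_setOf_eq, h]
      rw [hind, integral_indicator_const (1:ℝ) (hms _), smul_eq_mul, mul_one, measureReal_def]
    simp only [hP0]
  · -- terminal condition
    intro ω i
    rw [hKt' (Fin.last ℓ) ω i]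
    have hPlast : ∀ j, P (Fin.last ℓ) ω j = indR (M.T < τ j ω) := by
      intro j
      rw [hfixP]
      show (μ[fun ω' => indR (M.T < τ j ω')|𝓕 (Fin.last ℓ)]) ω = _
      rw [hM.hlast]
      rw [condExp_of_stronglyMeasurable le_rfl ((hmeas _).stronglyMeasurable) (hint _)]
    simp only [hPlast]
    ring

end Paper
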